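/- Let m ≥ 2. The set of numerical semigroups with concentration 2, multiplicity m, and genus exactly m equals {Δ(m) \ {m + i} | i ∈ {1, ..., m-1}}, where Δ(m) = {0} ∪ {m, m+1, ...}. -/
import Mathlib


open Set

/-- A numerical semigroup: contains 0, closed under addition, finite complement. -/
def IsNumSgp (S : Set ℕ) : Prop :=
  0 ∈ S ∧ (∀ a ∈ S, ∀ b ∈ S, a + b ∈ S) ∧ (Sᶜ : Set ℕ).Finite

/-- The multiplicity: least positive element. -/
noncomputable def mult (S : Set ℕ) : ℕ := sInf {n | n ∈ S ∧ n ≠ 0}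

/-- next_S(s) = min { x ∈ S | s < x }. -/
noncomputable def nextS (S : Set ℕ) (s : ℕ) : ℕ := sInf {x | x ∈ S ∧ s < x}

/-- The concentration C(S) = max { next_S(s) - s | s ∈ S \ {0} }. -/
noncomputable def conc (S : Set ℕ) : ℕ :=
  sSup {d | ∃ s ∈ S, s ≠ 0 ∧ d = nextS S s - s}

/-- The Frobenius number: largest gap. -/
noncomputable def frob (S : Set ℕ) : ℕ := sSup (Sᶜ : Set ℕ)

/-- The genus: number of gaps. -/
noncomputable def genus (S : Set ℕ) : ℕ := (Sᶜ : Set ℕ).ncard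

/-- x is a minimal generator of S. -/
def IsMinGen (S : Set ℕ) (x : ℕ) : Prop :=
  x ∈ S ∧ x ≠ 0 ∧ ¬∃ a ∈ S, ∃ b ∈ S, a ≠ 0 ∧ b ≠ 0 ∧ a + b = x

/-- The embedding dimension: number of minimal generators. -/
noncomputable def edim (S : Set ℕ) : ℕ := {x | IsMinGen S x}.ncard

/-- n(S): the number of elements of S smaller than the Frobenius number. -/
noncomputable def nS (S : Set ℕ) : ℕ := {s | s ∈ S ∧ s < frob S}.ncard

/-- The half-line Δ(m) = {0} ∪ {m, m+1, ...}. -/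
def Delta (m : ℕ) : Set ℕ := {0} ∪ {n | m ≤ n}

def IsHalfLine (S : Set ℕ) : Prop := ∃ m, S = Delta m

/-- An irreducible numerical semigroup. -/
def Irred (S : Set ℕ) : Prop :=
  ¬∃ T₁ T₂ : Set ℕ, IsNumSgp T₁ ∧ IsNumSgp T₂ ∧ S ⊂ T₁ ∧ S ⊂ T₂ ∧ S = T₁ ∩ T₂

lemma mem_Delta_iff {m n : ℕ} : n ∈ Delta m ↔ n = 0 ∨ m ≤ n := by
  simp [Delta]

lemma nextS_eq {S : Set ℕ} {s v : ℕ} (hv : v ∈ S) (hsv : s < v)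
    (hmin : ∀ x ∈ S, s < x → v ≤ x) : nextS S s = v :=
  le_antisymm (Nat.sInf_le ⟨hv, hsv⟩)
    (le_csInf ⟨v, hv, hsv⟩ fun x hx => hmin x hx.1 hx.2)


theorem stmt9 (m : ℕ) (hm : 2 ≤ m) :
    {S : Set ℕ | IsNumSgp S ∧ conc S = 2 ∧ mult S = m ∧ genus S = m} =
      {T : Set ℕ | ∃ i : ℕ, 1 ≤ i ∧ i ≤ m - 1 ∧ T = Delta m \ {m + i}} := by
  ext S
  simp only [Set.mem_setOf_eq]
  constructor
  · rintro ⟨⟨h0, hadd, hfin⟩, _hconc, hmult, hgen⟩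
    -- S is nonempty among positive elements
    obtain ⟨b, hb⟩ := hfin.bddAbove
    have hbS : ∀ n, b < n → n ∈ S := by
      intro n hn
      by_contra hns
      exact absurd (hb hns) (by omega)
    have hne : {n | n ∈ S ∧ n ≠ 0}.Nonempty := ⟨b + 1, hbS _ (by omega), by omega⟩
    have hmS : m ∈ S := by
      have := Nat.sInf_mem hne
      rw [show sInf {n | n ∈ S ∧ n ≠ 0} = mult S from rfl, hmult] at this
      exact this.1
    have hlow : ∀ n ∈ S, n ≠ 0 → m ≤ n := by
      intro n hn hn0
      have := Nat.sInf_le (show n ∈ {n | n ∈ S ∧ n ≠ 0} from ⟨hn, hn0⟩)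
      rwa [show sInf {n | n ∈ S ∧ n ≠ 0} = mult S from rfl, hmult] at this
    -- the small gaps
    set A : Set ℕ := ↑(Finset.Ioo 0 m) with hA
    have hAsub : A ⊆ Sᶜ := by
      intro n hn
      simp only [hA, Finset.coe_Ioo, Set.mem_Ioo] at hn
      intro hnS
      exact absurd (hlow n hnS (by omega)) (by omega)
    have hAcard : A.ncard = m - 1 := by
      rw [hA, Set.ncard_coe_finset, Nat.card_Ioo]; omega
    have hdiff : (Sᶜ \ A).ncard = 1 := by
      rw [Set.ncard_diff hAsub (by rw [hA]; exact (Finset.Ioo 0 m).finite_toSet),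
        hAcard, show (Sᶜ).ncard = genus S from rfl, hgen]
      omega
    obtain ⟨g, hg⟩ := Set.ncard_eq_one.mp hdiff
    have hcompl : Sᶜ = A ∪ {g} := by
      rw [← hg, Set.union_diff_cancel hAsub]
    have hgC : g ∈ Sᶜ := by rw [hcompl]; exact Or.inr rfl
    have hgA : g ∉ A := by
      have : g ∈ Sᶜ \ A := by rw [hg]; rfl
      exact this.2
    simp only [hA, Finset.coe_Ioo, Set.mem_Ioo, not_and, not_lt] at hgA
    have hg0 : g ≠ 0 := fun h => hgC (h ▸ h0)
    have hgm : m < g := by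
      rcases Nat.lt_or_ge g m with h | h
      · exact absurd (hgA (by omega)) (by omega)
      · rcases eq_or_lt_of_le h with h' | h'
        · exact absurd hmS (h' ▸ hgC)
        · exact h'
    have hg2m : g < 2 * m := by
      by_contra h
      push_neg at h
      have hgmS : g - m ∈ S := by
        by_contra hc
        have : g - m ∈ Sᶜ := hc
        rw [hcompl] at this
        rcases this with h' | h'
        · simp only [hA, Finset.coe_Ioo, Set.mem_Ioo] at h'
          omega
        · simp only [Set.mem_singleton_iff] at h'
          omega
      have := hadd _ hgmS _ hmS
      rw [show g - m + m = g by omega] at this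
      exact hgC this
    refine ⟨g - m, by omega, by omega, ?_⟩
    ext n
    have hn' : n ∈ S ↔ n ∉ Sᶜ := (not_not).symm
    rw [hn', hcompl]
    simp only [hA, Set.mem_union, Finset.coe_Ioo, Set.mem_Ioo, Set.mem_singleton_iff,
      Set.mem_diff, mem_Delta_iff, Set.mem_singleton_iff]
    omega
  · rintro ⟨i, hi1, hi2, rfl⟩
    have hi2' : i ≤ m - 1 := hi2
    set T : Set ℕ := Delta m \ {m + i} with hT
    have hmemT : ∀ n, n ∈ T ↔ (n = 0 ∨ m ≤ n) ∧ n ≠ m + i := by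
      intro n
      rw [hT, Set.mem_diff, mem_Delta_iff, Set.mem_singleton_iff]
    have h0T : 0 ∈ T := (hmemT 0).mpr ⟨Or.inl rfl, by omega⟩
    have haddT : ∀ a ∈ T, ∀ b ∈ T, a + b ∈ T := by
      intro a ha b hb
      rw [hmemT] at ha hb ⊢
      omega
    have hcomplT : Tᶜ = ↑(insert (m + i) (Finset.Ioo 0 m)) := by
      ext n
      simp only [Set.mem_compl_iff, hmemT, Finset.coe_insert, Set.mem_insert_iff,
        Finset.mem_coe, Finset.mem_Ioo]
      omega
    have hfinT : (Tᶜ : Set ℕ).Finite := by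
      rw [hcomplT]; exact Finset.finite_toSet _
    refine ⟨⟨h0T, haddT, hfinT⟩, ?_, ?_, ?_⟩
    · -- conc = 2
      have hnext : ∀ s ∈ T, s ≠ 0 → nextS T s = if s + 1 = m + i then s + 2 else s + 1 := by
        intro s hs hs0
        rw [hmemT] at hs
        split_ifs with h
        · refine nextS_eq ((hmemT _).mpr ⟨Or.inr (by omega), by omega⟩) (by omega) ?_
          intro x hx hsx
          rw [hmemT] at hx
          omega
        · refine nextS_eq ((hmemT _).mpr ⟨Or.inr (by omega), by omega⟩) (by omega) ?_
          intro x hx hsx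
          rw [hmemT] at hx
          omega
      have h2mem : (2 : ℕ) ∈ {d | ∃ s ∈ T, s ≠ 0 ∧ d = nextS T s - s} := by
        refine ⟨m + i - 1, (hmemT _).mpr ⟨Or.inr (by omega), by omega⟩, by omega, ?_⟩
        rw [hnext _ ((hmemT _).mpr ⟨Or.inr (by omega), by omega⟩) (by omega)]
        rw [if_pos (by omega)]
        omega
      have hub : ∀ d ∈ {d | ∃ s ∈ T, s ≠ 0 ∧ d = nextS T s - s}, d ≤ 2 := by
        rintro d ⟨s, hs, hs0, rfl⟩
        rw [hnext s hs hs0]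
        split_ifs <;> omega
      exact le_antisymm (csSup_le ⟨2, h2mem⟩ hub) (le_csSup ⟨2, hub⟩ h2mem)
    · -- mult = m
      refine le_antisymm (Nat.sInf_le ⟨(hmemT m).mpr ⟨Or.inr le_rfl, by omega⟩, by omega⟩) ?_
      refine le_csInf ⟨m, (hmemT m).mpr ⟨Or.inr le_rfl, by omega⟩, by omega⟩ ?_
      rintro n ⟨hn, hn0⟩
      rw [hmemT] at hn
      omega
    · -- genus = m
      rw [genus, hcomplT, Set.ncard_coe_finset,
        Finset.card_insert_of_notMem (by simp), Nat.card_Ioo]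
      omega
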